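/- On the open subset of ℝ^{2N} where x_1^2 − y_1^2 + ⋯ + x_N^2 − y_N^2 ≠ 0, the function f(x_1, y_1, …, x_N, y_N) = (1/2) arctan( (2x_1y_1 + ⋯ + 2x_Ny_N) / (x_1^2 − y_1^2 + ⋯ + x_N^2 − y_N^2) ) satisfies the minimal hypersurface equation in ℝ^{2N+1}: Σ_{k=1}^N [ ∂/∂x_k ( f_{x_k} / W ) + ∂/∂y_k ( f_{y_k} / W ) ] = 0, where W = √( 1 + Σ_{k=1}^N ( f_{x_k}^2 + f_{y_k}^2 ) ). Hence the graph of f (the Choe–Hoppe helicoid, up to homothety) is a minimal hypersurface in ℝ^{2N+1}. (Example 3.3/Remark 3.4.) -/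

import Mathlib

open scoped BigOperators
open Real

/-- Partial derivative of `f` in the `i`-th coordinate direction. -/
noncomputable def pd {ι : Type*} [Fintype ι] [DecidableEq ι]
    {F : Type*} [NormedAddCommGroup F] [NormedSpace ℝ F]
    (i : ι) (f : EuclideanSpace ℝ ι → F) (u : EuclideanSpace ℝ ι) : F :=
  fderiv ℝ f u (EuclideanSpace.single i 1)


noncomputable section ChoeHoppeAux

variable {N : ℕ}


lemma myHasFDerivAt_div {E : Type*} [NormedAddCommGroup E] [NormedSpace ℝ E]
    {f g : E → ℝ} {f' g' : E →L[ℝ] ℝ} {x : E}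
    (hf : HasFDerivAt f f' x) (hg : HasFDerivAt g g' x) (hx : g x ≠ 0) :
    HasFDerivAt (fun y => f y / g y)
      ((g x)⁻¹ • f' - (f x / g x ^ 2) • g') x := by
  have hinv : HasFDerivAt (fun y => (g y)⁻¹) ((-(g x ^ 2)⁻¹ : ℝ) • g') x :=
    (hasDerivAt_inv hx).comp_hasFDerivAt x hg
  have h := hf.fun_mul hinv
  have hfun : (fun y => f y / g y) = fun y => f y * (g y)⁻¹ := by
    funext y; rw [div_eq_mul_inv]
  rw [hfun]
  convert! h using 1
  ext v
  simp
  ring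



abbrev E (N : ℕ) := EuclideanSpace ℝ (Fin N ⊕ Fin N)

def AA (q : E N) : ℝ := ∑ k : Fin N, 2 * q (Sum.inl k) * q (Sum.inr k)
def BB (q : E N) : ℝ := ∑ k : Fin N, (q (Sum.inl k) ^ 2 - q (Sum.inr k) ^ 2)
def RR (q : E N) : ℝ := ∑ i : Fin N ⊕ Fin N, q i ^ 2
def SS (q : E N) : ℝ := AA q ^ 2 + BB q ^ 2

def AA' (q : E N) : E N →L[ℝ] ℝ :=
  ∑ k : Fin N, ((2 * q (Sum.inr k)) • EuclideanSpace.proj (Sum.inl k)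
    + (2 * q (Sum.inl k)) • EuclideanSpace.proj (Sum.inr k))
def BB' (q : E N) : E N →L[ℝ] ℝ :=
  ∑ k : Fin N, ((2 * q (Sum.inl k)) • EuclideanSpace.proj (Sum.inl k)
    - (2 * q (Sum.inr k)) • EuclideanSpace.proj (Sum.inr k))
def RR' (q : E N) : E N →L[ℝ] ℝ :=
  ∑ i : Fin N ⊕ Fin N, (2 * q i) • EuclideanSpace.proj i
def SS' (q : E N) : E N →L[ℝ] ℝ := (2 * AA q) • AA' q + (2 * BB q) • BB' q

lemma hasProj (i : Fin N ⊕ Fin N) (q : E N) :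
    HasFDerivAt (fun y : E N => y i) (EuclideanSpace.proj (𝕜 := ℝ) i) q :=
  (EuclideanSpace.proj (𝕜 := ℝ) i).hasFDerivAt

lemma hasAA (q : E N) : HasFDerivAt AA (AA' q) q := by
  apply HasFDerivAt.fun_sum
  intro k _
  have h := ((hasProj (Sum.inl k) q).const_mul (2:ℝ)).fun_mul (hasProj (Sum.inr k) q)
  convert! h using 1
  ext v; simp [EuclideanSpace.proj]; ring

lemma hasBB (q : E N) : HasFDerivAt BB (BB' q) q := by
  apply HasFDerivAt.fun_sum
  intro k _
  have h := ((hasProj (Sum.inl k) q).fun_mul (hasProj (Sum.inl k) q)).fun_sub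
    ((hasProj (Sum.inr k) q).fun_mul (hasProj (Sum.inr k) q))
  have hfun : (fun y : E N => y (Sum.inl k) ^ 2 - y (Sum.inr k) ^ 2)
      = fun y : E N => y (Sum.inl k) * y (Sum.inl k) - y (Sum.inr k) * y (Sum.inr k) := by
    funext y; ring
  rw [hfun]
  convert! h using 1
  ext v; simp [EuclideanSpace.proj]; ring

lemma hasRR (q : E N) : HasFDerivAt RR (RR' q) q := by
  apply HasFDerivAt.fun_sum
  intro i _
  have h := (hasProj i q).fun_mul (hasProj i q)
  have hfun : (fun y : E N => y i ^ 2) = fun y : E N => y i * y i := by funext y; ring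
  rw [hfun]
  convert! h using 1
  ext v; simp [EuclideanSpace.proj]; ring

lemma hasSS (q : E N) : HasFDerivAt SS (SS' q) q := by
  have h := ((hasAA q).fun_mul (hasAA q)).fun_add ((hasBB q).fun_mul (hasBB q))
  have hfun : (SS (N := N)) = fun q => AA q * AA q + BB q * BB q := by
    funext y; simp [SS]; ring
  rw [hfun]
  convert! h using 1
  ext v; simp [SS']; ring

lemma SS_pos {q : E N} (hq : BB q ≠ 0) : 0 < SS q := by
  have h1 : 0 < BB q ^ 2 := lt_of_le_of_ne (sq_nonneg _) (Ne.symm (pow_ne_zero 2 hq))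
  have h2 : 0 ≤ AA q ^ 2 := sq_nonneg _
  simp only [SS]; linarith

def FD (q : E N) : E N →L[ℝ] ℝ := ((2 * SS q)⁻¹) • (BB q • AA' q - AA q • BB' q)

lemma hasF {f : E N → ℝ}
    (hf : ∀ p, f p = (1 / 2) * Real.arctan
      ((∑ k : Fin N, 2 * p (Sum.inl k) * p (Sum.inr k)) /
        (∑ k : Fin N, (p (Sum.inl k) ^ 2 - p (Sum.inr k) ^ 2))))
    {q : E N} (hq : BB q ≠ 0) : HasFDerivAt f (FD q) q := by
  have hfun : f = fun y => (1/2) * Real.arctan (AA y / BB y) := by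
    funext y; rw [hf y]; rfl
  rw [hfun]
  have h1 := myHasFDerivAt_div (hasAA q) (hasBB q) hq
  have h2 := h1.arctan
  have h3 := h2.const_mul (1/2 : ℝ)
  convert! h3 using 1
  have hS := SS_pos hq
  ext v
  simp [FD]
  have hB2 : BB q ^ 2 ≠ 0 := pow_ne_zero 2 hq
  have h4 : 1 + (AA q / BB q) ^ 2 = SS q / BB q ^ 2 := by
    rw [SS]; field_simp; ring
  rw [h4]
  field_simp

def NL (k : Fin N) (q : E N) : ℝ := BB q * q (Sum.inr k) - AA q * q (Sum.inl k)
def NR (k : Fin N) (q : E N) : ℝ := BB q * q (Sum.inl k) + AA q * q (Sum.inr k)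

lemma pd_f_inl {f : E N → ℝ}
    (hf : ∀ p, f p = (1 / 2) * Real.arctan
      ((∑ k : Fin N, 2 * p (Sum.inl k) * p (Sum.inr k)) /
        (∑ k : Fin N, (p (Sum.inl k) ^ 2 - p (Sum.inr k) ^ 2))))
    {q : E N} (hq : BB q ≠ 0) (k : Fin N) :
    pd (Sum.inl k) f q = NL k q / SS q := by
  have hS := (SS_pos hq).ne'
  rw [pd, (hasF hf hq).fderiv]
  simp [FD, AA', BB', EuclideanSpace.proj, Finset.sum_ite_eq, NL]
  field_simp

lemma pd_f_inr {f : E N → ℝ}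
    (hf : ∀ p, f p = (1 / 2) * Real.arctan
      ((∑ k : Fin N, 2 * p (Sum.inl k) * p (Sum.inr k)) /
        (∑ k : Fin N, (p (Sum.inl k) ^ 2 - p (Sum.inr k) ^ 2))))
    {q : E N} (hq : BB q ≠ 0) (k : Fin N) :
    pd (Sum.inr k) f q = NR k q / SS q := by
  have hS := (SS_pos hq).ne'
  rw [pd, (hasF hf hq).fderiv]
  simp [FD, AA', BB', EuclideanSpace.proj, Finset.sum_ite_eq, NR]
  field_simp

lemma sumsq {f : E N → ℝ}
    (hf : ∀ p, f p = (1 / 2) * Real.arctan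
      ((∑ k : Fin N, 2 * p (Sum.inl k) * p (Sum.inr k)) /
        (∑ k : Fin N, (p (Sum.inl k) ^ 2 - p (Sum.inr k) ^ 2))))
    {q : E N} (hq : BB q ≠ 0) :
    ∑ i : Fin N ⊕ Fin N, pd i f q ^ 2 = RR q / SS q := by
  have hS := (SS_pos hq).ne'
  rw [Fintype.sum_sum_type]
  have h1 : ∀ k : Fin N, pd (Sum.inl k) f q ^ 2 + pd (Sum.inr k) f q ^ 2
      = (q (Sum.inl k) ^ 2 + q (Sum.inr k) ^ 2) / SS q := by
    intro k
    rw [pd_f_inl hf hq k, pd_f_inr hf hq k]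
    rw [div_pow, div_pow, ← add_div]
    rw [NL, NR]
    have : (BB q * q (Sum.inr k) - AA q * q (Sum.inl k)) ^ 2
        + (BB q * q (Sum.inl k) + AA q * q (Sum.inr k)) ^ 2
        = (q (Sum.inl k) ^ 2 + q (Sum.inr k) ^ 2) * SS q := by
      simp only [SS]; ring
    rw [this, sq (SS q), ← div_div, mul_div_assoc, div_self hS, mul_one]
  calc (∑ k : Fin N, pd (Sum.inl k) f q ^ 2) + ∑ k : Fin N, pd (Sum.inr k) f q ^ 2
      = ∑ k : Fin N, (pd (Sum.inl k) f q ^ 2 + pd (Sum.inr k) f q ^ 2) := by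
        rw [Finset.sum_add_distrib]
    _ = ∑ k : Fin N, (q (Sum.inl k) ^ 2 + q (Sum.inr k) ^ 2) / SS q := by
        exact Finset.sum_congr rfl fun k _ => h1 k
    _ = RR q / SS q := by
        rw [← Finset.sum_div, RR, Fintype.sum_sum_type, Finset.sum_add_distrib]

def PP (q : E N) : ℝ := SS q * (SS q + RR q)
def VV (q : E N) : ℝ := Real.sqrt (PP q)

lemma RR_nonneg (q : E N) : 0 ≤ RR q := Finset.sum_nonneg fun i _ => sq_nonneg _

lemma PP_pos {q : E N} (hq : BB q ≠ 0) : 0 < PP q :=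
  mul_pos (SS_pos hq) (by linarith [SS_pos hq, RR_nonneg q])

lemma VV_pos {q : E N} (hq : BB q ≠ 0) : 0 < VV q := Real.sqrt_pos.mpr (PP_pos hq)

lemma VV_sq {q : E N} (hq : BB q ≠ 0) : VV q ^ 2 = PP q :=
  Real.sq_sqrt (PP_pos hq).le

lemma hasPP (q : E N) :
    HasFDerivAt PP ((2 * SS q + RR q) • SS' q + SS q • RR' q) q := by
  have h := (hasSS q).fun_mul ((hasSS q).fun_add (hasRR q))
  have hfun : (PP (N := N)) = fun y => SS y * (SS y + RR y) := rfl
  rw [hfun]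
  convert! h using 1
  ext v; simp; ring

lemma hasVV {q : E N} (hq : BB q ≠ 0) :
    HasFDerivAt VV ((1 / (2 * VV q)) • ((2 * SS q + RR q) • SS' q + SS q • RR' q)) q :=
  (hasPP q).sqrt (PP_pos hq).ne'

lemma hasNL (k : Fin N) (q : E N) :
    HasFDerivAt (NL k)
      (BB q • EuclideanSpace.proj (Sum.inr k) + q (Sum.inr k) • BB' q
        - (AA q • EuclideanSpace.proj (Sum.inl k) + q (Sum.inl k) • AA' q)) q :=
  ((hasBB q).mul (hasProj (Sum.inr k) q)).sub ((hasAA q).mul (hasProj (Sum.inl k) q))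

lemma hasNR (k : Fin N) (q : E N) :
    HasFDerivAt (NR k)
      (BB q • EuclideanSpace.proj (Sum.inl k) + q (Sum.inl k) • BB' q
        + (AA q • EuclideanSpace.proj (Sum.inr k) + q (Sum.inr k) • AA' q)) q :=
  ((hasBB q).mul (hasProj (Sum.inl k) q)).add ((hasAA q).mul (hasProj (Sum.inr k) q))

lemma pd_GL {p : E N} (hp : BB p ≠ 0) (k : Fin N) :
    pd (Sum.inl k) (fun q => NL k q / VV q) p
      = (VV p)⁻¹ * (-(AA p))
        - (NL k p / VV p ^ 2) * ((1 / (2 * VV p)) *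
            ((2 * SS p + RR p) * (2 * AA p * (2 * p (Sum.inr k)) + 2 * BB p * (2 * p (Sum.inl k)))
              + SS p * (2 * p (Sum.inl k)))) := by
  have h := myHasFDerivAt_div (hasNL k p) (hasVV hp) (VV_pos hp).ne'
  rw [pd, h.fderiv]
  simp [SS', AA', BB', RR', EuclideanSpace.proj, Finset.sum_ite_eq]
  ring

lemma pd_GR {p : E N} (hp : BB p ≠ 0) (k : Fin N) :
    pd (Sum.inr k) (fun q => NR k q / VV q) p
      = (VV p)⁻¹ * (AA p)
        - (NR k p / VV p ^ 2) * ((1 / (2 * VV p)) *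
            ((2 * SS p + RR p) * (2 * AA p * (2 * p (Sum.inl k)) + 2 * BB p * (-(2 * p (Sum.inr k))))
              + SS p * (2 * p (Sum.inr k)))) := by
  have h := myHasFDerivAt_div (hasNR k p) (hasVV hp) (VV_pos hp).ne'
  rw [pd, h.fderiv]
  simp [SS', AA', BB', RR', EuclideanSpace.proj, Finset.sum_ite_eq]
  ring

lemma quotL {f : E N → ℝ}
    (hf : ∀ p, f p = (1 / 2) * Real.arctan
      ((∑ k : Fin N, 2 * p (Sum.inl k) * p (Sum.inr k)) /
        (∑ k : Fin N, (p (Sum.inl k) ^ 2 - p (Sum.inr k) ^ 2))))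
    {W : E N → ℝ}
    (hW : ∀ p, W p = Real.sqrt (1 + ∑ i : Fin N ⊕ Fin N, pd i f p ^ 2))
    {q : E N} (hq : BB q ≠ 0) (k : Fin N) :
    pd (Sum.inl k) f q / W q = NL k q / VV q := by
  have hS := SS_pos hq
  have hkey : SS q * Real.sqrt (1 + RR q / SS q) = VV q := by
    rw [show VV q = Real.sqrt (SS q * (SS q + RR q)) from rfl]
    rw [← Real.sqrt_sq hS.le, ← Real.sqrt_mul (sq_nonneg _)]
    congr 1
    field_simp
    rw [Real.sqrt_sq hS.le]
  rw [pd_f_inl hf hq k, hW, sumsq hf hq, div_div, hkey]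

lemma quotR {f : E N → ℝ}
    (hf : ∀ p, f p = (1 / 2) * Real.arctan
      ((∑ k : Fin N, 2 * p (Sum.inl k) * p (Sum.inr k)) /
        (∑ k : Fin N, (p (Sum.inl k) ^ 2 - p (Sum.inr k) ^ 2))))
    {W : E N → ℝ}
    (hW : ∀ p, W p = Real.sqrt (1 + ∑ i : Fin N ⊕ Fin N, pd i f p ^ 2))
    {q : E N} (hq : BB q ≠ 0) (k : Fin N) :
    pd (Sum.inr k) f q / W q = NR k q / VV q := by
  have hS := SS_pos hq
  have hkey : SS q * Real.sqrt (1 + RR q / SS q) = VV q := by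
    rw [show VV q = Real.sqrt (SS q * (SS q + RR q)) from rfl]
    rw [← Real.sqrt_sq hS.le, ← Real.sqrt_mul (sq_nonneg _)]
    congr 1
    field_simp
    rw [Real.sqrt_sq hS.le]
  rw [pd_f_inr hf hq k, hW, sumsq hf hq, div_div, hkey]

lemma BB_continuous : Continuous (BB (N := N)) := by
  apply continuous_finset_sum
  intro k _
  exact ((EuclideanSpace.proj (𝕜 := ℝ) (Sum.inl k)).continuous.pow 2).sub
    ((EuclideanSpace.proj (𝕜 := ℝ) (Sum.inr k)).continuous.pow 2)


end ChoeHoppeAux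

/-- Example 3.3 / Remark 3.4: on the open set where `x₁² − y₁² + ⋯ + x_N² − y_N² ≠ 0`,
the function
`f = (1/2) arctan((2x₁y₁ + ⋯ + 2x_N y_N)/(x₁² − y₁² + ⋯ + x_N² − y_N²))`
satisfies the minimal hypersurface equation in `ℝ^{2N+1}`; hence its graph (the
Choe–Hoppe helicoid, up to homothety) is a minimal hypersurface in `ℝ^{2N+1}`.
Here the coordinates `x_k` are indexed by `Sum.inl k` and the `y_k` by `Sum.inr k`. -/
theorem choe_hoppe_helicoid_graph_minimal (N : ℕ) (hN : 1 ≤ N)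
    (f : EuclideanSpace ℝ (Fin N ⊕ Fin N) → ℝ)
    (hf : ∀ p, f p = (1 / 2) * Real.arctan
      ((∑ k : Fin N, 2 * p (Sum.inl k) * p (Sum.inr k)) /
        (∑ k : Fin N, (p (Sum.inl k) ^ 2 - p (Sum.inr k) ^ 2))))
    (W : EuclideanSpace ℝ (Fin N ⊕ Fin N) → ℝ)
    (hW : ∀ p, W p = Real.sqrt (1 + ∑ i : Fin N ⊕ Fin N, pd i f p ^ 2)) :
    ∀ p : EuclideanSpace ℝ (Fin N ⊕ Fin N),
      (∑ k : Fin N, (p (Sum.inl k) ^ 2 - p (Sum.inr k) ^ 2)) ≠ 0 →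
      ∑ k : Fin N,
        (pd (Sum.inl k) (fun q => pd (Sum.inl k) f q / W q) p
          + pd (Sum.inr k) (fun q => pd (Sum.inr k) f q / W q) p) = 0 := by
  intro p hp
  have hpB : BB p ≠ 0 := hp
  have hU : {q : E N | BB q ≠ 0} ∈ nhds p := by
    have : IsOpen {q : E N | BB q ≠ 0} := isOpen_ne.preimage BB_continuous
    exact this.mem_nhds hpB
  have hv := (VV_pos hpB).ne'
  have hcongL : ∀ k : Fin N,
      pd (Sum.inl k) (fun q => pd (Sum.inl k) f q / W q) p
        = pd (Sum.inl k) (fun q => NL k q / VV q) p := by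
    intro k
    exact congrArg (fun L => L (EuclideanSpace.single (Sum.inl k) 1))
      (Filter.EventuallyEq.fderiv_eq (𝕜 := ℝ)
        (Filter.eventuallyEq_of_mem hU fun q hq => quotL hf hW hq k))
  have hcongR : ∀ k : Fin N,
      pd (Sum.inr k) (fun q => pd (Sum.inr k) f q / W q) p
        = pd (Sum.inr k) (fun q => NR k q / VV q) p := by
    intro k
    exact congrArg (fun L => L (EuclideanSpace.single (Sum.inr k) 1))
      (Filter.EventuallyEq.fderiv_eq (𝕜 := ℝ)
        (Filter.eventuallyEq_of_mem hU fun q hq => quotR hf hW hq k))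
  have key : ∀ k : Fin N,
      pd (Sum.inl k) (fun q => pd (Sum.inl k) f q / W q) p
        + pd (Sum.inr k) (fun q => pd (Sum.inr k) f q / W q) p
      = (-(SS p) / (2 * VV p ^ 3)) *
          (2 * BB p * (2 * p (Sum.inl k) * p (Sum.inr k))
            - 2 * AA p * (p (Sum.inl k) ^ 2 - p (Sum.inr k) ^ 2)) := by
    intro k
    rw [hcongL k, hcongR k, pd_GL hpB k, pd_GR hpB k, NL, NR]
    field_simp
    ring
  rw [Finset.sum_congr rfl fun k _ => key k, ← Finset.mul_sum,
    Finset.sum_sub_distrib, ← Finset.mul_sum, ← Finset.mul_sum]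
  have hA : ∑ k : Fin N, 2 * p (Sum.inl k) * p (Sum.inr k) = AA p := rfl
  have hB : ∑ k : Fin N, (p (Sum.inl k) ^ 2 - p (Sum.inr k) ^ 2) = BB p := rfl
  rw [hA, hB]
  ring
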